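/- If the subalgebra C(p,q) of C = C(p,q,z) is simple, then the nil radical R is the unique prime two-sided ideal of C. -/

import Mathlib

open Classical in
/-- The weight of generator `i`: `1` on `P`, `-1` on `M`, `0` elsewhere. -/
noncomputable def cliffordWeight {ι : Type} (P M : Set ι) (i : ι) : ℝ :=
  if i ∈ P then 1 else if i ∈ M then -1 else 0

/-- The diagonal bilinear form `B(x,y) = ∑ i, w i * x i * y i` on `ι →₀ ℝ`. -/
noncomputable def cliffordBilin {ι : Type} (P M : Set ι) :
    (ι →₀ ℝ) →ₗ[ℝ] (ι →₀ ℝ) →ₗ[ℝ] ℝ :=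
  Finsupp.lsum ℝ fun i =>
    LinearMap.toSpanSingleton ℝ ((ι →₀ ℝ) →ₗ[ℝ] ℝ) (cliffordWeight P M i • Finsupp.lapply i)

/-- The quadratic form of `C(p,q,z)`. -/
noncomputable def cliffordQ {ι : Type} (P M : Set ι) : QuadraticForm ℝ (ι →₀ ℝ) :=
  LinearMap.BilinMap.toQuadraticMap (cliffordBilin P M)

/-- The Clifford algebra `C(p,q,z)` (`Z` is the complement of `P ∪ M` in `ι`). -/
noncomputable abbrev Cl {ι : Type} (P M : Set ι) := CliffordAlgebra (cliffordQ P M)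

/-- The generator `e_i` of `C(p,q,z)`. -/
noncomputable def gen {ι : Type} (P M : Set ι) (i : ι) : Cl P M :=
  CliffordAlgebra.ι (cliffordQ P M) (Finsupp.single i 1)

/-- The product `e_I` over a finite ordered subset `I`. -/
noncomputable def prodGen {ι : Type} [LinearOrder ι] (P M : Set ι) (s : Finset ι) : Cl P M :=
  ((s.sort (· ≤ ·)).map (gen P M)).prod

/-- The subalgebra `C(p,q)` generated by the `e_λ`, `λ ∈ P ∪ M`. -/
noncomputable def Cpq {ι : Type} (P M : Set ι) : Subalgebra ℝ (Cl P M) :=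
  Algebra.adjoin ℝ (gen P M '' (P ∪ M))

/-- The ideal generated by the nilpotent generators `e_λ`, `λ ∈ Z`. -/
noncomputable def nilGenIdeal {ι : Type} (P M Z : Set ι) : TwoSidedIdeal (Cl P M) :=
  TwoSidedIdeal.span (gen P M '' Z)

/-- The nil radical of a ring: the supremum (sum) of all nil two-sided ideals. -/
def nilRad (A : Type*) [Ring A] : TwoSidedIdeal A :=
  sSup {I : TwoSidedIdeal A | ∀ x ∈ I, IsNilpotent x}

/-- A two-sided ideal `I` is nilpotent: `Iⁿ = 0`, phrased via products of `n` elements. -/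
def TwoSidedIdeal.IsNilpotentIdeal {A : Type*} [Ring A] (I : TwoSidedIdeal A) : Prop :=
  ∃ n : ℕ, 0 < n ∧ ∀ l : List A, l.length = n → (∀ x ∈ l, x ∈ I) → l.prod = 0

/-- A two-sided ideal is prime. -/
def TwoSidedIdeal.IsPrimeIdeal {A : Type*} [Ring A] (I : TwoSidedIdeal A) : Prop :=
  I ≠ ⊤ ∧ ∀ J K : TwoSidedIdeal A, (∀ a ∈ J, ∀ b ∈ K, a * b ∈ I) → J ≤ I ∨ K ≤ I

section Aux

variable {ι : Type} (P M : Set ι)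

open Classical in
noncomputable def retr : (ι →₀ ℝ) →ₗ[ℝ] (ι →₀ ℝ) :=
  Finsupp.lsum ℝ fun i => if i ∈ P ∪ M then (Finsupp.lsingle i : ℝ →ₗ[ℝ] (ι →₀ ℝ)) else 0

open Classical in
lemma retr_single (i : ι) (c : ℝ) :
    retr P M (Finsupp.single i c) = if i ∈ P ∪ M then Finsupp.single i c else 0 := by
  classical
  rw [retr, Finsupp.lsum_single]
  split <;> simp

open Classical in
lemma retr_apply (x : ι →₀ ℝ) (i : ι) :
    retr P M x i = if i ∈ P ∪ M then x i else 0 := by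
  classical
  induction x using Finsupp.induction_linear with
  | zero => simp
  | add f g hf hg => rw [map_add, Finsupp.add_apply, hf, hg]; split <;> simp
  | single j c =>
      rw [retr_single]
      by_cases hj : j ∈ P ∪ M
      · simp only [if_pos hj]
        by_cases hij : j = i
        · subst hij; simp [hj]
        · simp [Finsupp.single_apply, hij]
      · simp only [if_neg hj, Finsupp.coe_zero, Pi.zero_apply]
        by_cases hij : j = i
        · subst hij; simp [hj, Finsupp.single_apply]
        · split <;> simp [Finsupp.single_apply, hij]

lemma bilin_apply (x y : ι →₀ ℝ) :
    cliffordBilin P M x y = ∑ i ∈ x.support, cliffordWeight P M i * x i * y i := by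
  rw [cliffordBilin, Finsupp.lsum_apply, Finsupp.sum, LinearMap.coe_sum, Finset.sum_apply]
  refine Finset.sum_congr rfl fun i _ => ?_
  simp [LinearMap.toSpanSingleton_apply, smul_eq_mul]
  ring

lemma weight_eq_zero {i : ι} (hi : i ∉ P ∪ M) : cliffordWeight P M i = 0 := by
  rw [cliffordWeight, if_neg (fun h => hi (Or.inl h)), if_neg (fun h => hi (Or.inr h))]

lemma Q_retr (x : ι →₀ ℝ) : cliffordQ P M (retr P M x) = cliffordQ P M x := by
  classical
  have hQ : ∀ y, cliffordQ P M y = cliffordBilin P M y y := fun y => rfl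
  rw [hQ, hQ, bilin_apply, bilin_apply]
  have hsub : (retr P M x).support ⊆ x.support := by
    intro i hi
    simp only [Finsupp.mem_support_iff] at hi ⊢
    intro h; apply hi; rw [retr_apply, h]; split <;> rfl
  rw [Finset.sum_subset hsub]
  · refine Finset.sum_congr rfl fun i _ => ?_
    by_cases hi : i ∈ P ∪ M
    · rw [retr_apply, if_pos hi]
    · rw [weight_eq_zero P M hi]; ring
  · intro i _ hi
    simp only [Finsupp.mem_support_iff, not_not] at hi
    rw [hi]; ring

noncomputable def phi : Cl P M →ₐ[ℝ] Cl P M :=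
  CliffordAlgebra.lift (cliffordQ P M)
    ⟨(CliffordAlgebra.ι (cliffordQ P M)).comp (retr P M), fun x => by
      rw [LinearMap.comp_apply, CliffordAlgebra.ι_sq_scalar, Q_retr]⟩

lemma phi_ι (v : ι →₀ ℝ) :
    phi P M (CliffordAlgebra.ι (cliffordQ P M) v) =
      CliffordAlgebra.ι (cliffordQ P M) (retr P M v) :=
  CliffordAlgebra.lift_ι_apply _ _ _

lemma phi_gen_mem {i : ι} (hi : i ∈ P ∪ M) : phi P M (gen P M i) = gen P M i := by
  rw [gen, phi_ι, retr_single, if_pos hi]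

lemma phi_gen_not_mem {i : ι} (hi : i ∉ P ∪ M) : phi P M (gen P M i) = 0 := by
  rw [gen, phi_ι, retr_single, if_neg hi, map_zero]


lemma ι_eq_sum (v : ι →₀ ℝ) :
    CliffordAlgebra.ι (cliffordQ P M) v = v.sum fun i c => c • gen P M i := by
  conv_lhs => rw [← Finsupp.sum_single v, map_finsuppSum]
  refine Finsupp.sum_congr fun i _ => ?_
  rw [gen, ← map_smul, Finsupp.smul_single, smul_eq_mul, mul_one]

lemma ι_mem_Cpq (v : ι →₀ ℝ) (hv : ∀ i ∈ v.support, i ∈ P ∪ M) :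
    CliffordAlgebra.ι (cliffordQ P M) v ∈ Cpq P M := by
  rw [ι_eq_sum]
  refine Subalgebra.sum_mem _ fun i hi => Subalgebra.smul_mem _ ?_ _
  exact Algebra.subset_adjoin ⟨i, hv i hi, rfl⟩

lemma phi_mem_Cpq (x : Cl P M) : phi P M x ∈ Cpq P M := by
  induction x using CliffordAlgebra.induction with
  | algebraMap r => rw [AlgHom.commutes]; exact Subalgebra.algebraMap_mem _ _
  | ι v =>
      rw [phi_ι]
      refine ι_mem_Cpq P M _ fun i hi => ?_
      by_contra h
      simp only [Finsupp.mem_support_iff] at hi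
      exact hi (by rw [retr_apply, if_neg h])
  | mul a b ha hb => rw [map_mul]; exact Subalgebra.mul_mem _ ha hb
  | add a b ha hb => rw [map_add]; exact Subalgebra.add_mem _ ha hb

lemma phi_fixes_Cpq (x : Cl P M) (hx : x ∈ Cpq P M) : phi P M x = x := by
  induction hx using Algebra.adjoin_induction with
  | mem a ha => obtain ⟨i, hi, rfl⟩ := ha; exact phi_gen_mem P M hi
  | algebraMap r => exact AlgHom.commutes _ _
  | add a b _ _ ha hb => rw [map_add, ha, hb]
  | mul a b _ _ ha hb => rw [map_mul, ha, hb]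

lemma Q_single_zero {z : ι} (hz : z ∉ P ∪ M) :
    cliffordQ P M (Finsupp.single z (1:ℝ)) = 0 := by
  have : cliffordQ P M (Finsupp.single z (1:ℝ)) =
      cliffordBilin P M (Finsupp.single z 1) (Finsupp.single z 1) := rfl
  rw [this, bilin_apply]
  refine Finset.sum_eq_zero fun i hi => ?_
  have := Finsupp.support_single_subset hi
  simp only [Finset.mem_singleton] at this
  subst this
  rw [weight_eq_zero P M hz]; ring

lemma polar_single_zero {z : ι} (hz : z ∉ P ∪ M) (v : ι →₀ ℝ) :
    QuadraticMap.polar (cliffordQ P M) (Finsupp.single z (1:ℝ)) v = 0 := by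
  rw [cliffordQ, LinearMap.BilinMap.polar_toQuadraticMap]
  have hzz : cliffordBilin P M (Finsupp.single z 1) v = 0 := by
    rw [bilin_apply]
    refine Finset.sum_eq_zero fun i hi => ?_
    have := Finsupp.support_single_subset hi
    simp only [Finset.mem_singleton] at this
    subst this
    rw [weight_eq_zero P M hz]; ring
  have hzz' : cliffordBilin P M v (Finsupp.single z 1) = 0 := by
    rw [bilin_apply]
    refine Finset.sum_eq_zero fun i hi => ?_
    classical
    by_cases h : i = z
    · subst h; rw [weight_eq_zero P M hz]; ring
    · rw [Finsupp.single_apply, if_neg (fun hh => h hh.symm)]; ring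
  rw [hzz, hzz', add_zero]

lemma gen_mul_comm {z : ι} (hz : z ∉ P ∪ M) (c : Cl P M) :
    ∃ c', gen P M z * c = c' * gen P M z := by
  induction c using CliffordAlgebra.induction with
  | algebraMap r => exact ⟨algebraMap ℝ _ r, (Algebra.commutes r _).symm⟩
  | ι v =>
      refine ⟨-CliffordAlgebra.ι (cliffordQ P M) v, ?_⟩
      have := CliffordAlgebra.ι_mul_ι_add_swap (Q := cliffordQ P M) (Finsupp.single z 1) v
      rw [polar_single_zero P M hz, map_zero] at this
      rw [gen, neg_mul]
      exact eq_neg_of_add_eq_zero_left this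
  | mul a b ha hb =>
      obtain ⟨a', ha'⟩ := ha; obtain ⟨b', hb'⟩ := hb
      exact ⟨a' * b', by rw [← mul_assoc, ha', mul_assoc, hb', ← mul_assoc]⟩
  | add a b ha hb =>
      obtain ⟨a', ha'⟩ := ha; obtain ⟨b', hb'⟩ := hb
      exact ⟨a' + b', by rw [mul_add, ha', hb', add_mul]⟩

lemma gen_sq_zero {z : ι} (hz : z ∉ P ∪ M) : gen P M z * gen P M z = 0 := by
  rw [gen, CliffordAlgebra.ι_sq_scalar, Q_single_zero P M hz, map_zero]

lemma gen_mul_mul_gen {z : ι} (hz : z ∉ P ∪ M) (c : Cl P M) :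
    gen P M z * c * gen P M z = 0 := by
  obtain ⟨c', hc'⟩ := gen_mul_comm P M hz c
  rw [hc', mul_assoc, gen_sq_zero P M hz, mul_zero]


lemma span_le' {s : Set (Cl P M)} {I : TwoSidedIdeal (Cl P M)} (h : s ⊆ I) :
    TwoSidedIdeal.span s ≤ I :=
  fun x hx => TwoSidedIdeal.mem_span_iff.mp hx I h

variable {Z : Set ι}

lemma smul_mem' (I : TwoSidedIdeal (Cl P M)) (c : ℝ) {x : Cl P M} (hx : x ∈ I) :
    c • x ∈ I := by
  rw [Algebra.smul_def]
  exact I.mul_mem_left _ _ hx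

section hyps

variable (hPZ : Disjoint P Z) (hMZ : Disjoint M Z) (hU : P ∪ M ∪ Z = Set.univ)

include hPZ hMZ hU

lemma mem_Z_iff (i : ι) : i ∈ Z ↔ i ∉ P ∪ M := by
  constructor
  · rintro hz (hp | hm)
    · exact Set.disjoint_left.mp hPZ hp hz
    · exact Set.disjoint_left.mp hMZ hm hz
  · intro h
    have : i ∈ P ∪ M ∪ Z := hU ▸ Set.mem_univ i
    rcases this with h' | h'
    · exact absurd h' h
    · exact h'

omit hPZ hMZ hU in
lemma ι_mem_R {v : ι →₀ ℝ} (hv : ∀ i ∈ v.support, i ∈ Z) :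
    CliffordAlgebra.ι (cliffordQ P M) v ∈ nilGenIdeal P M Z := by
  rw [ι_eq_sum, Finsupp.sum]
  refine TwoSidedIdeal.finsetSum_mem _ _ _ fun i hi => smul_mem' P M _ _ ?_
  exact TwoSidedIdeal.subset_span ⟨i, hv i hi, rfl⟩

lemma sub_phi_mem (x : Cl P M) : x - phi P M x ∈ nilGenIdeal P M Z := by
  induction x using CliffordAlgebra.induction with
  | algebraMap r => rw [AlgHom.commutes, sub_self]; exact TwoSidedIdeal.zero_mem _
  | ι v =>
      rw [phi_ι, ← map_sub]
      refine ι_mem_R P M ?_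
      intro i hi
      rw [Finsupp.mem_support_iff, Finsupp.sub_apply, retr_apply] at hi
      rw [mem_Z_iff P M hPZ hMZ hU]
      intro h
      rw [if_pos h, sub_self] at hi
      exact hi rfl
  | mul a b ha hb =>
      have : a * b - phi P M (a * b) =
          (a - phi P M a) * b + phi P M a * (b - phi P M b) := by
        rw [map_mul]; noncomm_ring
      rw [this]
      exact TwoSidedIdeal.add_mem _ (TwoSidedIdeal.mul_mem_right _ _ _ ha)
        (TwoSidedIdeal.mul_mem_left _ _ _ hb)
  | add a b ha hb =>
      have : a + b - phi P M (a + b) = (a - phi P M a) + (b - phi P M b) := by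
        rw [map_add]; noncomm_ring
      rw [this]
      exact TwoSidedIdeal.add_mem _ ha hb

lemma R_le_ker : nilGenIdeal P M Z ≤ TwoSidedIdeal.ker (phi P M) := by
  refine span_le' P M ?_
  rintro x ⟨i, hi, rfl⟩
  rw [SetLike.mem_coe, TwoSidedIdeal.mem_ker]
  exact phi_gen_not_mem P M ((mem_Z_iff P M hPZ hMZ hU i).mp hi)

lemma mem_R_iff (x : Cl P M) : x ∈ nilGenIdeal P M Z ↔ phi P M x = 0 := by
  constructor
  · intro hx
    exact (TwoSidedIdeal.mem_ker _).mp (R_le_ker P M hPZ hMZ hU hx)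
  · intro hx
    have := sub_phi_mem P M hPZ hMZ hU (Z := Z) x
    rwa [hx, sub_zero] at this

end hyps


lemma simple_no_mid {A : Type*} [Ring A] (hA : IsSimpleRing A) {u v : A}
    (hu : u ≠ 0) (hv : v ≠ 0) (h : ∀ c : A, u * c * v = 0) : False := by
  let L : TwoSidedIdeal A := TwoSidedIdeal.mk' {x : A | ∀ c : A, u * c * x = 0}
    (fun c => by rw [mul_zero])
    (fun {x y} hx hy c => by rw [mul_add, hx c, hy c, add_zero])
    (fun {x} hx c => by rw [mul_neg, hx c, neg_zero])
    (fun {x y} hy c => by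
      have h1 := hy (c * x)
      calc u * c * (x * y) = u * (c * x) * y := by noncomm_ring
        _ = 0 := h1)
    (fun {x y} hx c => by rw [← mul_assoc, hx c, zero_mul])
  have hvL : v ∈ L := by
    rw [TwoSidedIdeal.mem_mk']
    exact h
  have hLne : L ≠ ⊥ := by
    intro hb
    rw [hb, TwoSidedIdeal.mem_bot] at hvL
    exact hv hvL
  have hLtop : L = ⊤ := (hA.simple.eq_bot_or_eq_top L).resolve_left hLne
  have h1L : (1 : A) ∈ L := hLtop ▸ TwoSidedIdeal.mem_top _
  rw [TwoSidedIdeal.mem_mk'] at h1L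
  have := h1L 1
  rw [mul_one, mul_one] at this
  exact hu this

end Aux

/-- STATEMENT 5: if `C(p,q)` is simple then the nil radical `R` is the unique prime
two-sided ideal of `C(p,q,z)`. -/
theorem nilradical_unique_prime_of_simple {ι : Type} (P M Z : Set ι)
    (hPM : Disjoint P M) (hPZ : Disjoint P Z) (hMZ : Disjoint M Z)
    (hU : P ∪ M ∪ Z = Set.univ)
    (hs : IsSimpleRing (Cpq P M)) :
    ∀ I : TwoSidedIdeal (Cl P M), I.IsPrimeIdeal ↔ I = nilGenIdeal P M Z := by
  have one_ne : (1 : Cl P M) ≠ 0 := by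
    intro h
    have h1 : (1 : Cpq P M) = 0 := Subtype.ext (by simpa using h)
    exact one_ne_zero h1
  have one_not_R : (1 : Cl P M) ∉ nilGenIdeal P M Z := by
    rw [mem_R_iff P M hPZ hMZ hU, map_one]
    exact one_ne
  intro I
  rw [TwoSidedIdeal.IsPrimeIdeal]
  constructor
  · rintro ⟨hne, hpr⟩
    have hRle : nilGenIdeal P M Z ≤ I := by
      refine span_le' P M ?_
      rintro x ⟨z, hz, rfl⟩
      have hznot : z ∉ P ∪ M := Set.disjoint_left.mp (Set.disjoint_union_left.mpr ⟨hPZ, hMZ⟩).symm hz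
      set Jz : TwoSidedIdeal (Cl P M) := TwoSidedIdeal.mk' {x | ∃ c, x = c * gen P M z}
        ⟨0, (zero_mul _).symm⟩
        (fun ⟨c, hc⟩ ⟨d, hd⟩ => ⟨c + d, by rw [hc, hd, add_mul]⟩)
        (fun ⟨c, hc⟩ => ⟨-c, by rw [hc, neg_mul]⟩)
        (fun {x y} ⟨c, hc⟩ => ⟨x * c, by rw [hc, mul_assoc]⟩)
        (fun {x y} ⟨c, hc⟩ => by
          obtain ⟨d, hd⟩ := gen_mul_comm P M hznot y
          exact ⟨c * d, by rw [hc, mul_assoc, hd, ← mul_assoc]⟩) with hJz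
      have hgz : gen P M z ∈ Jz := by
        rw [hJz, TwoSidedIdeal.mem_mk']
        exact ⟨1, (one_mul _).symm⟩
      have := hpr Jz Jz ?_
      · rcases this with h | h
        · exact h hgz
        · exact h hgz
      · intro a ha b hb
        rw [hJz, TwoSidedIdeal.mem_mk'] at ha hb
        obtain ⟨c, rfl⟩ := ha
        obtain ⟨d, rfl⟩ := hb
        have : c * gen P M z * (d * gen P M z) = c * (gen P M z * d * gen P M z) := by
          noncomm_ring
        rw [this, gen_mul_mul_gen P M hznot, mul_zero]
        exact TwoSidedIdeal.zero_mem I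
    refine le_antisymm ?_ hRle
    intro a haI
    by_contra haR
    have hphia : phi P M a ≠ 0 := by
      rw [mem_R_iff P M hPZ hMZ hU] at haR
      exact haR
    have haI' : a ∈ I := haI
    have hpaI : phi P M a ∈ I := by
      have h1 : a - phi P M a ∈ I := hRle (sub_phi_mem P M hPZ hMZ hU a)
      have := I.sub_mem haI' h1
      simpa using this
    set L : TwoSidedIdeal (Cpq P M) := TwoSidedIdeal.mk' {x : Cpq P M | (x : Cl P M) ∈ I}
      (by simp [TwoSidedIdeal.zero_mem])
      (fun {x y} hx hy => by simpa using I.add_mem hx hy)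
      (fun {x} hx => by simpa using I.neg_mem hx)
      (fun {x y} hy => by simpa using I.mul_mem_left x y hy)
      (fun {x y} hx => by simpa using I.mul_mem_right x y hx) with hL
    have hmemL : (⟨phi P M a, phi_mem_Cpq P M a⟩ : Cpq P M) ∈ L := by
      rw [hL, TwoSidedIdeal.mem_mk']
      exact hpaI
    have hLne : L ≠ ⊥ := by
      intro h
      rw [h, TwoSidedIdeal.mem_bot] at hmemL
      exact hphia (by simpa using congrArg Subtype.val hmemL)
    have hLtop : L = ⊤ := (hs.simple.eq_bot_or_eq_top L).resolve_left hLne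
    have h1L : (1 : Cpq P M) ∈ L := hLtop ▸ TwoSidedIdeal.mem_top _
    have h1I : (1 : Cl P M) ∈ I := by
      rw [hL, TwoSidedIdeal.mem_mk'] at h1L
      simpa using h1L
    exact absurd (TwoSidedIdeal.eq_top I h1I) hne
  · rintro rfl
    refine ⟨?_, ?_⟩
    · intro h
      exact one_not_R (h ▸ TwoSidedIdeal.mem_top _)
    · intro J K hJK
      by_contra hc
      push_neg at hc
      obtain ⟨hJ, hK⟩ := hc
      rw [SetLike.not_le_iff_exists] at hJ hK
      obtain ⟨a, haJ, haR⟩ := hJ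
      obtain ⟨b, hbK, hbR⟩ := hK
      have hu : phi P M a ≠ 0 := fun h => haR ((mem_R_iff P M hPZ hMZ hU a).mpr h)
      have hv : phi P M b ≠ 0 := fun h => hbR ((mem_R_iff P M hPZ hMZ hU b).mpr h)
      have key : ∀ c : Cl P M, phi P M a * phi P M c * phi P M b = 0 := by
        intro c
        have h1 : a * c ∈ J := J.mul_mem_right _ _ haJ
        have h2 : a * c * b ∈ nilGenIdeal P M Z := hJK _ h1 _ hbK
        rw [mem_R_iff P M hPZ hMZ hU, map_mul, map_mul] at h2
        exact h2
      have habs : False := by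
        refine simple_no_mid hs (u := ⟨phi P M a, phi_mem_Cpq P M a⟩)
          (v := ⟨phi P M b, phi_mem_Cpq P M b⟩) ?_ ?_ ?_
        · intro h
          exact hu (by simpa using congrArg Subtype.val h)
        · intro h
          exact hv (by simpa using congrArg Subtype.val h)
        · intro c
          refine Subtype.ext ?_
          have hcfix : phi P M (c : Cl P M) = (c : Cl P M) := phi_fixes_Cpq P M _ c.2
          have := key (c : Cl P M)
          rw [hcfix] at this
          simpa using this
      exact habs
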